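/- Let w ≤ -1 be an integer, let S be a combinatorial w-Riedtmann configuration with exactly |w| - 1 outer-isolated vertices, and let s ∈ S. Then s has exactly |w| - 1 replacements. -/

import Mathlib

open Set

/-- An arc of the `∞`-gon: a pair of integers `(t, u)`, source `t`, target `u`. -/
abbrev Arc := ℤ × ℤ

/-- `(t,u)` is `d`-admissible for `d = w - 1`: `u - t ≤ w` and `u - t ≡ 1 (mod d)`. -/
def IsAdmissible (w : ℤ) (a : Arc) : Prop :=
  a.2 - a.1 ≤ w ∧ (w - 1) ∣ (a.2 - a.1 - 1)

/-- `p` is an endpoint of the arc `a`. -/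
def IsEndpoint (p : ℤ) (a : Arc) : Prop := p = a.1 ∨ p = a.2

/-- `b = (v,x)` is an overarc of `a = (t,u)` if `x < u < t < v`. -/
def OverarcOf (b a : Arc) : Prop := b.2 < a.2 ∧ a.2 < a.1 ∧ a.1 < b.1

/-- `b = (v,x)` is an overarc of the integer `p` if `x < p < v`. -/
def OverarcOfVertex (b : Arc) (p : ℤ) : Prop := b.2 < p ∧ p < b.1

/-- Arcs `a` and `b` share an endpoint. -/
def SharesEndpoint (a b : Arc) : Prop :=
  a.1 = b.1 ∨ a.1 = b.2 ∨ a.2 = b.1 ∨ a.2 = b.2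

/-- Arcs `a = (t,u)` and `b = (v,x)` strictly cross: `u < x < t < v` or `x < u < v < t`. -/
def StrictCross (a b : Arc) : Prop :=
  (a.2 < b.2 ∧ b.2 < a.1 ∧ a.1 < b.1) ∨ (b.2 < a.2 ∧ a.2 < b.1 ∧ b.1 < a.1)

/-- Two arcs cross if they share an endpoint or strictly cross. -/
def Cross (a b : Arc) : Prop := SharesEndpoint a b ∨ StrictCross a b

/-- `p` is isolated with respect to `X` if it is an endpoint of no arc of `X`. -/
def Isolated (X : Set Arc) (p : ℤ) : Prop := ∀ a ∈ X, ¬ IsEndpoint p a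

/-- `p` is an inner-isolated vertex of the arc `b` with respect to `X`: `p` is isolated,
`b` is an overarc of `p`, and no arc of `X` of which `b` is an overarc is an overarc of `p`. -/
def InnerIsolatedOf (X : Set Arc) (b : Arc) (p : ℤ) : Prop :=
  Isolated X p ∧ OverarcOfVertex b p ∧ ∀ c ∈ X, OverarcOf b c → ¬ OverarcOfVertex c p

/-- `p` is an outer-isolated vertex of `X`: isolated with no overarc in `X`. -/
def OuterIsolated (X : Set Arc) (p : ℤ) : Prop :=
  Isolated X p ∧ ∀ b ∈ X, ¬ OverarcOfVertex b p

/-- A combinatorial `w`-Hom configuration: a set of `d`-admissible arcs (`d = w - 1`),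
pairwise noncrossing, such that every arc has exactly `|w| - 1` inner-isolated vertices
and there are at most `|w|` outer-isolated vertices. -/
def IsHomConfig (w : ℤ) (S : Set Arc) : Prop :=
  (∀ a ∈ S, IsAdmissible w a) ∧
  (∀ a ∈ S, ∀ b ∈ S, a ≠ b → ¬ Cross a b) ∧
  (∀ a ∈ S, {p : ℤ | InnerIsolatedOf S a p}.encard = ((-w - 1).toNat : ℕ∞)) ∧
  {p : ℤ | OuterIsolated S p}.encard ≤ ((-w).toNat : ℕ∞)

/-- A combinatorial `w`-Riedtmann configuration: a `w`-Hom configuration with at most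
`|w| - 1` outer-isolated vertices. -/
def IsRiedtmann (w : ℤ) (S : Set Arc) : Prop :=
  IsHomConfig w S ∧ {p : ℤ | OuterIsolated S p}.encard ≤ ((-w - 1).toNat : ℕ∞)

/-- A combinatorial `w`-simple-minded system: a `w`-Riedtmann configuration in which
every arc has an overarc. -/
def IsSMS (w : ℤ) (S : Set Arc) : Prop :=
  IsRiedtmann w S ∧ ∀ a ∈ S, ∃ b ∈ S, OverarcOf b a

/-- `t` is a replacement of `s` in the `w`-Hom configuration `S`. -/
def IsReplacement (w : ℤ) (S : Set Arc) (s t : Arc) : Prop :=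
  t ≠ s ∧ IsHomConfig w ((S \ {s}) ∪ {t})

/-- `c` is a Ptolemy arc of class I associated to the strictly crossing arcs `a` and `b`:
one of the four arcs joining an endpoint of `a` to an endpoint of `b`. -/
def IsPtolemyI (a b c : Arc) : Prop :=
  StrictCross a b ∧ c.2 < c.1 ∧
    ((IsEndpoint c.1 a ∧ IsEndpoint c.2 b) ∨ (IsEndpoint c.1 b ∧ IsEndpoint c.2 a))

/-- `c` is a Ptolemy arc of class II associated to the neighbouring arcs `a` and `b`:
the distance `1` is realised by endpoints `p` and `p - 1`, and `c` joins the endpoint of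
`a` other than `p, p-1` to the endpoint of `b` other than `p, p-1`. -/
def IsPtolemyII (a b c : Arc) : Prop :=
  ¬ Cross a b ∧
  ∃ p e f : ℤ,
    (((IsEndpoint p a ∧ IsEndpoint (p - 1) b) ∧ (IsEndpoint e a ∧ e ≠ p) ∧
        (IsEndpoint f b ∧ f ≠ p - 1)) ∨
     ((IsEndpoint p b ∧ IsEndpoint (p - 1) a) ∧ (IsEndpoint e b ∧ e ≠ p) ∧
        (IsEndpoint f a ∧ f ≠ p - 1))) ∧
    c = (max e f, min e f)

/-- `Y` is a set of `d`-admissible arcs closed under adjoining `d`-admissible Ptolemy arcs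
of classes I and II. -/
def PtolemyClosed (w : ℤ) (Y : Set Arc) : Prop :=
  (∀ a ∈ Y, IsAdmissible w a) ∧
  ∀ a ∈ Y, ∀ b ∈ Y, ∀ c : Arc,
    (IsPtolemyI a b c ∨ IsPtolemyII a b c) → IsAdmissible w c → c ∈ Y

/-- The Ptolemy closure of `X`: the smallest set of `d`-admissible arcs containing `X`
and closed under adjoining `d`-admissible Ptolemy arcs of classes I and II. -/
def PtolemyClosure (w : ℤ) (X : Set Arc) : Set Arc :=
  ⋂₀ {Y : Set Arc | X ⊆ Y ∧ PtolemyClosed w Y}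

/-- `p` is a left fountain of `A`: infinitely many arcs of `A` have source `p`. -/
def LeftFountain (A : Set Arc) (p : ℤ) : Prop := {a ∈ A | a.1 = p}.Infinite

/-- `p` is a right fountain of `A`: infinitely many arcs of `A` have target `p`. -/
def RightFountain (A : Set Arc) (p : ℤ) : Prop := {a ∈ A | a.2 = p}.Infinite

/-- The set `X_S = { (t + j, u + j) : (t,u) ∈ S, 0 ≤ j ≤ |w| - 1 }`, corresponding to the
union of the shifted copies `Σ^i S` for `w + 1 ≤ i ≤ 0`. -/
def ShiftFamily (w : ℤ) (S : Set Arc) : Set Arc :=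
  {c : Arc | ∃ a ∈ S, ∃ j : ℤ, 0 ≤ j ∧ j ≤ -w - 1 ∧ c = (a.1 + j, a.2 + j)}

lemma aux_nested {a b : Arc} (h : ¬ Cross a b) {p : ℤ}
    (h1 : a.2 < p) (h2 : p < a.1) (h3 : b.2 < p) (h4 : p < b.1) :
    OverarcOf a b ∨ OverarcOf b a := by
  unfold Cross SharesEndpoint StrictCross at h
  unfold OverarcOf
  omega
lemma aux_inner_unique {X : Set Arc} (hnc : ∀ a ∈ X, ∀ b ∈ X, a ≠ b → ¬ Cross a b)
    {a b : Arc} {p : ℤ} (haX : a ∈ X) (hbX : b ∈ X) (hab : a ≠ b)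
    (ha : InnerIsolatedOf X a p) (hb : InnerIsolatedOf X b p) : False := by
  obtain ⟨_, hav, hamin⟩ := ha
  obtain ⟨_, hbv, hbmin⟩ := hb
  rcases aux_nested (hnc a haX b hbX hab) hav.1 hav.2 hbv.1 hbv.2 with h | h
  · exact hamin b hbX h hbv
  · exact hbmin a haX h hav
lemma aux_cross_comm {a b : Arc} : Cross a b → Cross b a := by
  unfold Cross SharesEndpoint StrictCross; omega
lemma aux_min_vertex {X : Set Arc} {p : ℤ} {a0 : Arc} (h0 : a0 ∈ X)
    (hcov : OverarcOfVertex a0 p) :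
    ∃ m ∈ X, OverarcOfVertex m p ∧ ∀ c ∈ X, OverarcOf m c → ¬ OverarcOfVertex c p := by
  generalize hk : (a0.1 - a0.2).toNat = k
  induction k using Nat.strong_induction_on generalizing a0 with
  | _ k ih =>
    by_cases hm : ∀ c ∈ X, OverarcOf a0 c → ¬ OverarcOfVertex c p
    · exact ⟨a0, h0, hcov, hm⟩
    · push_neg at hm
      obtain ⟨c, hc, hoc, hcp⟩ := hm
      subst hk
      refine ih (c.1 - c.2).toNat ?_ hc hcp rfl
      unfold OverarcOf at hoc; unfold OverarcOfVertex at hcp hcov; omega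
lemma aux_inner_anti {X Y : Set Arc} (h : X ⊆ Y) {a : Arc} {p : ℤ} :
    InnerIsolatedOf Y a p → InnerIsolatedOf X a p :=
  fun ⟨h1, h2, h3⟩ => ⟨fun b hb => h1 b (h hb), h2, fun b hb => h3 b (h hb)⟩
lemma aux_outer_anti {X Y : Set Arc} (h : X ⊆ Y) {p : ℤ} :
    OuterIsolated Y p → OuterIsolated X p :=
  fun ⟨h1, h2⟩ => ⟨fun b hb => h1 b (h hb), fun b hb => h2 b (h hb)⟩

lemma aux_enat_contra1 {n : ℕ} (h : 2 + (n : ℕ∞) ≤ (n : ℕ∞)) : False := by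
  rw [show (2 : ℕ∞) + (n : ℕ∞) = ((2 + n : ℕ) : ℕ∞) by push_cast; ring] at h
  exact absurd (Nat.cast_le.mp h) (by omega)

lemma aux_enat_contra2 {n : ℕ} (h : 2 + (n : ℕ∞) + (n : ℕ∞) ≤ (n : ℕ∞)) : False := by
  rw [show (2 : ℕ∞) + (n : ℕ∞) + (n : ℕ∞) = ((2 + n + n : ℕ) : ℕ∞) by push_cast; ring] at h
  exact absurd (Nat.cast_le.mp h) (by omega)

section Region

variable {X : Set Arc} {Q : Set ℤ} {V : ℤ → Prop} {U : Arc → Prop} {c : Arc}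

lemma aux_noncross_c
    (hQ : ∀ p, p ∈ Q ↔ (Isolated X p ∧ V p ∧ ∀ a ∈ X, U a → ¬(a.2 < p ∧ p < a.1)))
    (hCov : ∀ a ∈ X, ∀ p, V p → a.2 < p → p < a.1 →
      U a ∨ (∀ r, V r → a.2 < r ∧ r < a.1))
    (hc2 : c.2 ∈ Q) (hc1 : c.1 ∈ Q) :
    ∀ a ∈ X, ¬ Cross c a := by
  intro a haX hcr
  obtain ⟨hiso2, hV2, hmin2⟩ := (hQ c.2).1 hc2
  obtain ⟨hiso1, hV1, hmin1⟩ := (hQ c.1).1 hc1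
  rcases hcr with hsh | hst
  · rcases hsh with h | h | h | h
    · exact hiso1 a haX (Or.inl h)
    · exact hiso1 a haX (Or.inr h)
    · exact hiso2 a haX (Or.inl h)
    · exact hiso2 a haX (Or.inr h)
  · rcases hst with ⟨h1, h2, h3⟩ | ⟨h1, h2, h3⟩
    · rcases hCov a haX c.1 hV1 (by omega) (by omega) with hU | hall
      · exact hmin1 a haX hU ⟨by omega, by omega⟩
      · have := hall c.2 hV2; omega
    · rcases hCov a haX c.2 hV2 h1 h2 with hU | hall
      · exact hmin2 a haX hU ⟨h1, h2⟩
      · have := hall c.1 hV1; omega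

lemma aux_innT_c
    (hQ : ∀ p, p ∈ Q ↔ (Isolated X p ∧ V p ∧ ∀ a ∈ X, U a → ¬(a.2 < p ∧ p < a.1)))
    (hVb : ∀ p q r, p ∈ Q → q ∈ Q → p < r → r < q → V r)
    (hEndV : ∀ p, V p → ∀ a ∈ X, IsEndpoint p a → U a)
    (hc2 : c.2 ∈ Q) (hc1 : c.1 ∈ Q)
    (hT : ∀ a ∈ X, ¬ Cross c a) (hcX : c ∉ X) :
    {p : ℤ | InnerIsolatedOf (X ∪ {c}) c p} = Q ∩ Set.Ioo c.2 c.1 := by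
  ext p
  simp only [mem_setOf_eq, mem_inter_iff, mem_Ioo]
  constructor
  · rintro ⟨hiso, hov, hmin⟩
    have hpV : V p := hVb c.2 c.1 p hc2 hc1 hov.1 hov.2
    have hisoX : Isolated X p := fun a ha => hiso a (Or.inl ha)
    refine ⟨(hQ p).2 ⟨hisoX, hpV, ?_⟩, hov.1, hov.2⟩
    intro a haX hUa hcov
    rcases aux_nested (hT a haX) hov.1 hov.2 hcov.1 hcov.2 with h | h
    · exact hmin a (Or.inl haX) h ⟨hcov.1, hcov.2⟩
    · obtain ⟨g1, g2, g3⟩ := h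
      exact ((hQ c.2).1 hc2).2.2 a haX hUa ⟨g1, by omega⟩
  · rintro ⟨hpQ, h1, h2⟩
    obtain ⟨hiso, hV, hmin⟩ := (hQ p).1 hpQ
    refine ⟨?_, ⟨h1, h2⟩, ?_⟩
    · rintro a (haX | haC)
      · exact hiso a haX
      · rw [Set.mem_singleton_iff] at haC
        subst haC
        rintro (h | h) <;> omega
    · rintro a (haX | haC) hover hcov
      · obtain ⟨g1, g2, g3⟩ := hover
        have hV1 : V a.1 := hVb c.2 c.1 a.1 hc2 hc1 (by omega) g3
        exact hmin a haX (hEndV a.1 hV1 a haX (Or.inl rfl)) ⟨hcov.1, hcov.2⟩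
      · rw [Set.mem_singleton_iff] at haC
        subst haC
        obtain ⟨g1, g2, g3⟩ := hover
        omega

end Region

lemma aux_innT_other (X : Set Arc) (c a : Arc)
    (hend : ∀ p, InnerIsolatedOf X a p → ¬ IsEndpoint p c)
    (hcov : ∀ p, InnerIsolatedOf X a p → OverarcOf a c → ¬ OverarcOfVertex c p) :
    {p : ℤ | InnerIsolatedOf (X ∪ {c}) a p} = {p : ℤ | InnerIsolatedOf X a p} := by
  ext p
  simp only [mem_setOf_eq]
  constructor
  · rintro ⟨hiso, hov, hmin⟩
    exact ⟨fun b hb => hiso b (Or.inl hb), hov, fun b hb h => hmin b (Or.inl hb) h⟩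
  · intro h
    obtain ⟨hiso, hov, hmin⟩ := h
    refine ⟨?_, hov, ?_⟩
    · rintro b (hb | hb)
      · exact hiso b hb
      · rw [Set.mem_singleton_iff] at hb; subst hb; exact hend p ⟨hiso, hov, hmin⟩
    · rintro b (hb | hb) hab hbv
      · exact hmin b hb hab hbv
      · rw [Set.mem_singleton_iff] at hb; subst hb
        exact hcov p ⟨hiso, hov, hmin⟩ hab hbv

lemma aux_m_contra (X : Set Arc) (c m : Arc) (n : ℕ)
    (hncT : ∀ a ∈ X ∪ {c}, ∀ b ∈ X ∪ {c}, a ≠ b → ¬ Cross a b)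
    (hinnT : ∀ a ∈ X ∪ {c}, {p : ℤ | InnerIsolatedOf (X ∪ {c}) a p}.encard = (n : ℕ∞))
    (hcX : c ∉ X) (hwfc : c.2 < c.1)
    (hmX : m ∈ X) (hmc : OverarcOf m c)
    (hmmin : ∀ a ∈ X, OverarcOf m a → ¬ OverarcOfVertex a c.2)
    (hiso2 : Isolated X c.2) (hiso1 : Isolated X c.1)
    (hm1min : ∀ a ∈ X, OverarcOf m a → ¬ OverarcOfVertex a c.1)
    (hcard : {p : ℤ | InnerIsolatedOf X m p}.encard = (n : ℕ∞)) : False := by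
  have hmc' : m.2 < c.2 ∧ c.2 < c.1 ∧ c.1 < m.1 := hmc
  set T := X ∪ {c} with hT
  have hcT : c ∈ T := Or.inr rfl
  have hmT : m ∈ T := Or.inl hmX
  have hcm : c ≠ m := fun h => hcX (h ▸ hmX)
  set A := {p : ℤ | InnerIsolatedOf T c p} with hA
  set B := {p : ℤ | InnerIsolatedOf T m p} with hB
  have hc2m : InnerIsolatedOf X m c.2 := ⟨hiso2, ⟨hmc'.1, by omega⟩, hmmin⟩
  have hc1m : InnerIsolatedOf X m c.1 := ⟨hiso1, ⟨by omega, hmc'.2.2⟩, hm1min⟩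
  have hAsub : A ⊆ {p : ℤ | InnerIsolatedOf X m p} := by
    rintro p ⟨hiso, hov, hmin⟩
    have hov' : c.2 < p ∧ p < c.1 := hov
    refine ⟨fun a ha => hiso a (Or.inl ha), ⟨by omega, by omega⟩, ?_⟩
    intro a haX hma hcov
    have hne : a ≠ c := fun h => hcX (h ▸ haX)
    have hcr := hncT a (Or.inl haX) c hcT hne
    rcases aux_nested hcr hcov.1 hcov.2 hov.1 hov.2 with h | h
    · obtain ⟨g1, g2, g3⟩ := h
      exact hmmin a haX hma ⟨g1, by omega⟩
    · exact hmin a (Or.inl haX) h ⟨hcov.1, hcov.2⟩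
  have hBsub : B ⊆ {p : ℤ | InnerIsolatedOf X m p} := by
    rintro p ⟨hiso, hov, hmin⟩
    exact ⟨fun a ha => hiso a (Or.inl ha), hov, fun a ha h => hmin a (Or.inl ha) h⟩
  have hsub : ({c.2, c.1} : Set ℤ) ∪ (A ∪ B) ⊆ {p : ℤ | InnerIsolatedOf X m p} := by
    rintro p ((rfl | rfl) | (hp | hp))
    · exact hc2m
    · exact hc1m
    · exact hAsub hp
    · exact hBsub hp
  have hAne : ∀ p ∈ A ∪ B, p ≠ c.2 ∧ p ≠ c.1 := by
    rintro p (hp | hp) <;>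
    · obtain ⟨hiso, -, -⟩ := hp
      have := hiso c hcT
      unfold IsEndpoint at this
      constructor <;> intro h <;> exact this (by omega)
  have hd1 : Disjoint ({c.2, c.1} : Set ℤ) (A ∪ B) := by
    rw [Set.disjoint_left]
    rintro p (rfl | rfl) hpab
    · exact (hAne _ hpab).1 rfl
    · exact (hAne _ hpab).2 rfl
  have hd2 : Disjoint A B := by
    rw [Set.disjoint_left]
    intro p hpA hpB
    exact aux_inner_unique hncT hcT hmT hcm hpA hpB
  have htot : (({c.2, c.1} : Set ℤ) ∪ (A ∪ B)).encard = 2 + ((n : ℕ∞) + (n : ℕ∞)) := by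
    rw [Set.encard_union_eq hd1, Set.encard_union_eq hd2,
      Set.encard_pair (by omega : c.2 ≠ c.1), hinnT c hcT, hinnT m hmT]
  have hle := Set.encard_mono hsub
  rw [htot, hcard] at hle
  exact aux_enat_contra2 (by rw [show (2:ℕ∞) + (n:ℕ∞) + (n:ℕ∞) = 2 + ((n:ℕ∞) + (n:ℕ∞)) by ring]; exact hle)

lemma aux_out_contra (X : Set Arc) (c : Arc) (n : ℕ)
    (hncT : ∀ a ∈ X ∪ {c}, ∀ b ∈ X ∪ {c}, a ≠ b → ¬ Cross a b)
    (hinnT : ∀ a ∈ X ∪ {c}, {p : ℤ | InnerIsolatedOf (X ∪ {c}) a p}.encard = (n : ℕ∞))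
    (hcX : c ∉ X) (hwfc : c.2 < c.1)
    (hiso2 : Isolated X c.2) (hiso1 : Isolated X c.1)
    (hnocov2 : ∀ a ∈ X, ¬ OverarcOfVertex a c.2)
    (hnocov1 : ∀ a ∈ X, ¬ OverarcOfVertex a c.1)
    (hcard : {p : ℤ | OuterIsolated X p}.encard = (n : ℕ∞)) : False := by
  set T := X ∪ {c} with hT
  have hcT : c ∈ T := Or.inr rfl
  set A := {p : ℤ | InnerIsolatedOf T c p} with hA
  have hAsub : A ⊆ {p : ℤ | OuterIsolated X p} := by
    rintro p ⟨hiso, hov, hmin⟩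
    refine ⟨fun a ha => hiso a (Or.inl ha), ?_⟩
    intro a haX hcov
    have hne : a ≠ c := fun h => hcX (h ▸ haX)
    have hcr := hncT a (Or.inl haX) c hcT hne
    rcases aux_nested hcr hcov.1 hcov.2 hov.1 hov.2 with h | h
    · obtain ⟨g1, g2, g3⟩ := h
      exact hnocov2 a haX ⟨g1, by omega⟩
    · exact hmin a (Or.inl haX) h ⟨hcov.1, hcov.2⟩
  have hsub : ({c.2, c.1} : Set ℤ) ∪ A ⊆ {p : ℤ | OuterIsolated X p} := by
    rintro p ((rfl | rfl) | hp)
    · exact ⟨hiso2, hnocov2⟩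
    · exact ⟨hiso1, hnocov1⟩
    · exact hAsub hp
  have hd1 : Disjoint ({c.2, c.1} : Set ℤ) A := by
    rw [Set.disjoint_left]
    rintro p (rfl | rfl) hpa <;>
    · obtain ⟨hiso, -, -⟩ := hpa
      have := hiso c hcT
      unfold IsEndpoint at this
      exact this (by omega)
  have htot : (({c.2, c.1} : Set ℤ) ∪ A).encard = 2 + (n : ℕ∞) := by
    rw [Set.encard_union_eq hd1, Set.encard_pair (by omega : c.2 ≠ c.1), hinnT c hcT]
  have hle := Set.encard_mono hsub
  rw [htot, hcard] at hle
  exact aux_enat_contra1 hle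
lemma aux_count_windows (Q : Set ℤ) (n : ℕ) (s : Arc)
    (hQcard : Q.encard = ((2 * n + 2 : ℕ) : ℕ∞))
    (hs2 : s.2 ∈ Q) (hs1 : s.1 ∈ Q) (hslt : s.2 < s.1)
    (hscnt : (Q ∩ Set.Ioo s.2 s.1).encard = (n : ℕ∞)) :
    {c : Arc | c ≠ s ∧ c.2 ∈ Q ∧ c.1 ∈ Q ∧ c.2 < c.1 ∧
      (Q ∩ Set.Ioo c.2 c.1).encard = (n : ℕ∞)}.encard = (n : ℕ∞) := by
  classical
  have hfin : Q.Finite := Set.finite_of_encard_eq_coe hQcard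
  set F := hfin.toFinset with hF
  have hFcard : F.card = 2 * n + 2 := by
    have := hfin.encard_eq_coe_toFinset_card
    rw [hQcard] at this
    exact_mod_cast this.symm
  set f := F.orderEmbOfFin hFcard with hf
  have hmono : StrictMono f := f.strictMono
  have hrange : ∀ p : ℤ, p ∈ Q ↔ ∃ j, f j = p := by
    intro p
    rw [show (∃ j, f j = p) ↔ p ∈ Set.range f from Iff.symm (Set.mem_range)]
    rw [Finset.range_orderEmbOfFin]
    simp [hF]
  -- interval identity
  have hIoo : ∀ i j : Fin (2 * n + 2), i < j →
      Q ∩ Set.Ioo (f i) (f j) = f '' Set.Ioo i j := by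
    intro i j hij
    ext p
    simp only [Set.mem_inter_iff, Set.mem_Ioo, Set.mem_image]
    constructor
    · rintro ⟨hpQ, h1, h2⟩
      obtain ⟨k, rfl⟩ := (hrange p).1 hpQ
      exact ⟨k, ⟨hmono.lt_iff_lt.1 h1, hmono.lt_iff_lt.1 h2⟩, rfl⟩
    · rintro ⟨k, ⟨hk1, hk2⟩, rfl⟩
      exact ⟨(hrange (f k)).2 ⟨k, rfl⟩, hmono hk1, hmono hk2⟩
  have hIoocard : ∀ i j : Fin (2 * n + 2), i < j →
      (Q ∩ Set.Ioo (f i) (f j)).encard = ((j.val - i.val - 1 : ℕ) : ℕ∞) := by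
    intro i j hij
    rw [hIoo i j hij, Set.InjOn.encard_image (Set.injOn_of_injective f.injective),
      ← Finset.coe_Ioo, Set.encard_coe_eq_coe_finsetCard, Fin.card_Ioo]
  set Win := {c : Arc | c.2 ∈ Q ∧ c.1 ∈ Q ∧ c.2 < c.1 ∧
      (Q ∩ Set.Ioo c.2 c.1).encard = (n : ℕ∞)} with hWin
  -- the window map
  have hlt1 : ∀ i : Fin (n + 1), (i.val : ℕ) < 2 * n + 2 := fun i => by omega
  have hlt2 : ∀ i : Fin (n + 1), (i.val + n + 1 : ℕ) < 2 * n + 2 := fun i => by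
    have := i.isLt; omega
  set φ : Fin (n + 1) → Arc :=
    fun i => (f ⟨i.val + n + 1, hlt2 i⟩, f ⟨i.val, by have := i.isLt; omega⟩) with hφ
  have hφinj : Function.Injective φ := by
    intro i i' h
    have h2 := congrArg Prod.snd h
    simp only [hφ] at h2
    have := f.injective h2
    exact Fin.ext (by simpa [Fin.ext_iff] using this)
  have hφmem : ∀ i, φ i ∈ Win := by
    intro i
    refine ⟨(hrange _).2 ⟨_, rfl⟩, (hrange _).2 ⟨_, rfl⟩, hmono (by simp [Fin.lt_def]), ?_⟩
    rw [hIoocard _ _ (by simp [Fin.lt_def])]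
    exact_mod_cast congrArg (Nat.cast : ℕ → ℕ∞) (by omega : i.val + n + 1 - i.val - 1 = n)
  have hWinrange : Win = Set.range φ := by
    ext c
    constructor
    · rintro ⟨hc2, hc1, hlt, hcnt⟩
      obtain ⟨j0, hj0⟩ := (hrange c.2).1 hc2
      obtain ⟨j1, hj1⟩ := (hrange c.1).1 hc1
      have hjlt : j0 < j1 := hmono.lt_iff_lt.1 (by rw [hj0, hj1]; exact hlt)
      have hcnt' := hIoocard j0 j1 hjlt
      rw [hj0, hj1, hcnt] at hcnt'
      have hval : (n : ℕ) = j1.val - j0.val - 1 := by exact_mod_cast hcnt'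
      have hj0n : j0.val < n + 1 := by
        have := j1.isLt
        have := Fin.lt_def.1 hjlt
        omega
      refine ⟨⟨j0.val, hj0n⟩, ?_⟩
      have hj1eq : (⟨j0.val + n + 1, hlt2 ⟨j0.val, hj0n⟩⟩ : Fin (2 * n + 2)) = j1 := by
        apply Fin.ext
        simp only []
        have := Fin.lt_def.1 hjlt
        omega
      show (f _, f _) = c
      rw [hj1eq]
      simp only []
      rw [hj0, hj1]
    · rintro ⟨i, rfl⟩
      exact hφmem i
  have hWincard : Win.encard = ((n + 1 : ℕ) : ℕ∞) := by
    rw [hWinrange, ← Set.image_univ, Set.InjOn.encard_image (Set.injOn_of_injective hφinj)]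
    simp [Set.encard_univ]
  have hsWin : s ∈ Win := ⟨hs2, hs1, hslt, hscnt⟩
  have hset : {c : Arc | c ≠ s ∧ c.2 ∈ Q ∧ c.1 ∈ Q ∧ c.2 < c.1 ∧
      (Q ∩ Set.Ioo c.2 c.1).encard = (n : ℕ∞)} = Win \ {s} := by
    ext c
    simp only [Set.mem_setOf_eq, Set.mem_diff, Set.mem_singleton_iff, hWin]
    tauto
  rw [hset]
  have h := Set.encard_diff_singleton_add_one hsWin
  rw [hWincard] at h
  refine ENat.add_left_injective_of_ne_top (by simp : (1 : ℕ∞) ≠ ⊤) ?_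
  show _ + _ = _ + _
  rw [h]
  push_cast
  ring

lemma aux_lemF (w : ℤ) (X : Set Arc)
    (hadm : ∀ a ∈ X, IsAdmissible w a) (hw : w ≤ -1)
    (hnc : ∀ a ∈ X, ∀ b ∈ X, a ≠ b → ¬ Cross a b)
    (U : Arc → Prop) (Q : Set ℤ) :
    ∀ k : ℕ, ∀ x y : ℤ, (y - x).toNat = k → x < y →
    (∀ p, x < p → p < y →
      (p ∈ Q ↔ (Isolated X p ∧ ∀ a ∈ X, U a → ¬(a.2 < p ∧ p < a.1)))) →
    (∀ p, x < p → p < y → ∀ a ∈ X, IsEndpoint p a → U a) →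
    (∀ a ∈ X, U a → ¬(a.2 < x ∧ x < a.1)) → (∀ a ∈ X, U a → a.2 ≠ x) →
    (∀ a ∈ X, U a → ¬(a.2 < y ∧ y < a.1)) → (∀ a ∈ X, U a → a.1 ≠ y) →
    (w - 1) ∣ (y - x - 1 - ((Q ∩ Set.Ioo x y).ncard : ℤ)) := by
  intro k
  induction k using Nat.strong_induction_on with
  | _ k ih =>
  intro x y hk hxy hWin hEnd hGL1 hGL2 hGR1 hGR2
  rcases eq_or_lt_of_le (by omega : x + 1 ≤ y) with heq | hlt
  · have hemp : Q ∩ Set.Ioo x y = ∅ := by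
      ext p
      simp only [mem_inter_iff, mem_Ioo, mem_empty_iff_false, iff_false, not_and]
      intro _ h1 h2; omega
    rw [hemp, Set.ncard_empty]
    have : y - x - 1 - ((0 : ℕ) : ℤ) = 0 := by push_cast; omega
    rw [this]
    exact dvd_zero _
  · have hfin : (Q ∩ Set.Ioo (x+1) y).Finite :=
      (Set.finite_Ioo (x+1) y).subset inter_subset_right
    by_cases hq : (x+1) ∈ Q
    · have hiso := (hWin (x+1) (by omega) hlt).1 hq
      have hrec := ih (y - (x+1)).toNat (by omega) (x+1) y rfl hlt
        (fun p h1 h2 => hWin p (by omega) h2) (fun p h1 h2 => hEnd p (by omega) h2)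
        (fun a ha hU => hiso.2 a ha hU)
        (fun a ha _ h => hiso.1 a ha (Or.inr h.symm))
        hGR1 hGR2
      have hset : Q ∩ Set.Ioo x y = insert (x+1) (Q ∩ Set.Ioo (x+1) y) := by
        ext p
        simp only [mem_inter_iff, mem_Ioo, mem_insert_iff]
        constructor
        · rintro ⟨hp, h1, h2⟩
          rcases eq_or_lt_of_le (by omega : x + 1 ≤ p) with h | h
          · exact Or.inl h.symm
          · exact Or.inr ⟨hp, h, h2⟩
        · rintro (rfl | ⟨hp, h1, h2⟩)
          · exact ⟨hq, by omega, hlt⟩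
          · exact ⟨hp, by omega, h2⟩
      rw [hset, Set.ncard_insert_of_notMem (by simp) hfin]
      have harith : y - x - 1 - (((Q ∩ Set.Ioo (x+1) y).ncard + 1 : ℕ) : ℤ) =
          y - (x+1) - 1 - ((Q ∩ Set.Ioo (x+1) y).ncard : ℤ) := by push_cast; ring
      rw [harith]
      exact hrec
    · have hwin1 := hWin (x+1) (by omega) hlt
      have hex : ∃ a ∈ X, IsEndpoint (x+1) a := by
        by_contra hno
        push_neg at hno
        apply hq
        refine hwin1.2 ⟨fun a ha h => hno a ha h, ?_⟩
        intro a ha hU h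
        have h1 := hGL1 a ha hU
        have h2 := hGL2 a ha hU
        omega
      obtain ⟨a, haX, hend⟩ := hex
      have hUa : U a := hEnd (x+1) (by omega) hlt a haX hend
      have haa : a.2 < a.1 := by have := (hadm a haX).1; omega
      have ha2 : a.2 = x + 1 := by
        have h1 := hGL1 a haX hUa
        have h2 := hGL2 a haX hUa
        unfold IsEndpoint at hend
        omega
      have ha1y : a.1 < y := by
        have h1 := hGR1 a haX hUa
        have h2 := hGR2 a haX hUa
        omega
      have hGL1' : ∀ a' ∈ X, U a' → ¬(a'.2 < a.1 ∧ a.1 < a'.1) := by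
        intro a' ha' hU' h
        have hne : a' ≠ a := by rintro rfl; omega
        have hcr := hnc a' ha' a haX hne
        have h1 := hGL1 a' ha' hU'
        have h2 := hGL2 a' ha' hU'
        unfold Cross SharesEndpoint StrictCross at hcr
        omega
      have hGL2' : ∀ a' ∈ X, U a' → a'.2 ≠ a.1 := by
        intro a' ha' hU' h
        have hne : a' ≠ a := by rintro rfl; omega
        have hcr := hnc a' ha' a haX hne
        unfold Cross SharesEndpoint StrictCross at hcr
        omega
      have hrec := ih (y - a.1).toNat (by omega) a.1 y rfl ha1y
        (fun p h1 h2 => hWin p (by omega) h2) (fun p h1 h2 => hEnd p (by omega) h2)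
        hGL1' hGL2' hGR1 hGR2
      have hset : Q ∩ Set.Ioo x y = Q ∩ Set.Ioo a.1 y := by
        ext p
        simp only [mem_inter_iff, mem_Ioo]
        constructor
        · rintro ⟨hp, h1, h2⟩
          refine ⟨hp, ?_, h2⟩
          by_contra hle
          push_neg at hle
          have hpw := (hWin p h1 h2).1 hp
          rcases eq_or_lt_of_le hle with he | hlt2
          · exact hpw.1 a haX (Or.inl he)
          · rcases eq_or_lt_of_le (by omega : x + 1 ≤ p) with he | h3
            · exact hq (he ▸ hp)
            · exact hpw.2 a haX hUa ⟨by omega, hlt2⟩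
        · rintro ⟨hp, h1, h2⟩
          exact ⟨hp, by omega, h2⟩
      rw [hset]
      obtain ⟨w1, hw1⟩ := hrec
      obtain ⟨w2, hw2⟩ := (hadm a haX).2
      exact ⟨w1 - w2, by linear_combination hw1 - hw2 + ha2⟩

lemma aux_main_b (w : ℤ) (hw : w ≤ -1) (S : Set Arc)
    (hadm : ∀ a ∈ S, IsAdmissible w a)
    (hnc : ∀ a ∈ S, ∀ b ∈ S, a ≠ b → ¬ Cross a b)
    (hinn : ∀ a ∈ S, {p : ℤ | InnerIsolatedOf S a p}.encard = ((-w - 1).toNat : ℕ∞))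
    (hout : {p : ℤ | OuterIsolated S p}.encard = ((-w - 1).toNat : ℕ∞))
    (s : Arc) (hs : s ∈ S)
    (b : Arc) (hbS : b ∈ S) (hbs : b ≠ s) (hbv : OverarcOfVertex b s.1)
    (hbmin : ∀ c ∈ S \ {s}, OverarcOf b c → ¬ OverarcOfVertex c s.1) :
    ∃ Q : Set ℤ,
      Q.encard = ((2 * (-w - 1).toNat + 2 : ℕ) : ℕ∞) ∧ s.2 ∈ Q ∧ s.1 ∈ Q ∧ s.2 < s.1 ∧
      (Q ∩ Set.Ioo s.2 s.1).encard = ((-w - 1).toNat : ℕ∞) ∧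
      {t : Arc | IsReplacement w S s t} =
        {c : Arc | c ≠ s ∧ c.2 ∈ Q ∧ c.1 ∈ Q ∧ c.2 < c.1 ∧
          (Q ∩ Set.Ioo c.2 c.1).encard = ((-w - 1).toNat : ℕ∞)} := by
  set n := (-w - 1).toNat with hndef
  have hn : (n : ℤ) = -w - 1 := Int.toNat_of_nonneg (by omega)
  set X := S \ {s} with hXdef
  have hXsub : X ⊆ S := Set.diff_subset
  have hadmX : ∀ a ∈ X, IsAdmissible w a := fun a ha => hadm a (hXsub ha)
  have hncX : ∀ a ∈ X, ∀ a' ∈ X, a ≠ a' → ¬ Cross a a' :=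
    fun a ha a' ha' h => hnc a (hXsub ha) a' (hXsub ha') h
  have wf : ∀ a ∈ S, a.2 < a.1 := fun a ha => by have := (hadm a ha).1; omega
  have hwfs : s.2 < s.1 := wf s hs
  have hwfb : b.2 < b.1 := wf b hbS
  have hbX : b ∈ X := ⟨hbS, fun h => hbs h⟩
  have hbv' : b.2 < s.1 ∧ s.1 < b.1 := hbv
  have hbov : OverarcOf b s := by
    have hcr := hnc b hbS s hs hbs
    unfold Cross SharesEndpoint StrictCross at hcr
    exact ⟨by omega, by omega, by omega⟩
  have hbov' : b.2 < s.2 ∧ s.2 < s.1 ∧ s.1 < b.1 := hbov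
  set Q := {p : ℤ | InnerIsolatedOf X b p} with hQdef
  set V : ℤ → Prop := fun p => b.2 < p ∧ p < b.1 with hVdef
  set U : Arc → Prop := fun a => OverarcOf b a with hUdef
  have hQiff : ∀ p, p ∈ Q ↔
      (Isolated X p ∧ V p ∧ ∀ a ∈ X, U a → ¬(a.2 < p ∧ p < a.1)) := fun p => Iff.rfl
  have hVb : ∀ p q r, p ∈ Q → q ∈ Q → p < r → r < q → V r := by
    intro p q r hp hq h1 h2
    have hVp : b.2 < p ∧ p < b.1 := ((hQiff p).1 hp).2.1
    have hVq : b.2 < q ∧ q < b.1 := ((hQiff q).1 hq).2.1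
    exact ⟨by omega, by omega⟩
  have hEndV : ∀ p, V p → ∀ a ∈ X, IsEndpoint p a → U a := by
    intro p hV a haX hep
    have hVp : b.2 < p ∧ p < b.1 := hV
    by_cases hab : a = b
    · show OverarcOf b a
      unfold OverarcOf
      unfold IsEndpoint at hep
      have e1 : a.1 = b.1 := by rw [hab]
      have e2 : a.2 = b.2 := by rw [hab]
      omega
    · have hcr := hnc a (hXsub haX) b hbS hab
      have hwfa : a.2 < a.1 := wf a (hXsub haX)
      unfold Cross SharesEndpoint StrictCross at hcr
      unfold IsEndpoint at hep
      show OverarcOf b a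
      unfold OverarcOf
      omega
  have hCov : ∀ a ∈ X, ∀ p, V p → a.2 < p → p < a.1 →
      U a ∨ (∀ r, V r → a.2 < r ∧ r < a.1) := by
    intro a haX p hV h1 h2
    have hVp : b.2 < p ∧ p < b.1 := hV
    by_cases hab : a = b
    · refine Or.inr (fun r hr => ?_)
      have e1 : a.1 = b.1 := by rw [hab]
      have e2 : a.2 = b.2 := by rw [hab]
      have hr' : b.2 < r ∧ r < b.1 := hr
      exact ⟨by omega, by omega⟩
    · rcases aux_nested (hnc a (hXsub haX) b hbS hab) h1 h2 hVp.1 hVp.2 with h | h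
      · obtain ⟨g1, g2, g3⟩ := h
        exact Or.inr (fun r hr => by obtain ⟨f1, f2⟩ := hr; exact ⟨by omega, by omega⟩)
      · exact Or.inl h
  -- s's endpoints are isolated in X
  have hsiso1 : Isolated X s.1 := by
    intro a haX hep
    obtain ⟨haS, has⟩ := haX
    have hne : a ≠ s := fun h => has h
    have hcr := hnc a haS s hs hne
    unfold Cross SharesEndpoint StrictCross at hcr
    unfold IsEndpoint at hep
    omega
  have hsiso2 : Isolated X s.2 := by
    intro a haX hep
    obtain ⟨haS, has⟩ := haX
    have hne : a ≠ s := fun h => has h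
    have hcr := hnc a haS s hs hne
    unfold Cross SharesEndpoint StrictCross at hcr
    unfold IsEndpoint at hep
    omega
  have hs1Q : s.1 ∈ Q := ⟨hsiso1, hbv, hbmin⟩
  have hs2Q : s.2 ∈ Q := by
    refine ⟨hsiso2, ⟨hbov'.1, by omega⟩, ?_⟩
    intro a haX hov hcov
    have hcov' : a.2 < s.2 ∧ s.2 < a.1 := hcov
    obtain ⟨haS, has⟩ := haX
    have hne : a ≠ s := fun h => has h
    have hwfa : a.2 < a.1 := wf a haS
    by_cases h1 : s.1 < a.1
    · exact hbmin a ⟨haS, has⟩ hov ⟨by omega, h1⟩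
    · have hcr := hnc a haS s hs hne
      unfold Cross SharesEndpoint StrictCross at hcr
      omega
  have hInnSs_sub : {p : ℤ | InnerIsolatedOf S s p} ⊆ Q := by
    rintro p ⟨hiso, hov, hmin⟩
    have hov' : s.2 < p ∧ p < s.1 := hov
    refine ⟨fun a haX => hiso a (hXsub haX), ⟨by omega, by omega⟩, ?_⟩
    intro a haX hba hcov
    obtain ⟨haS, has⟩ := haX
    have hne : a ≠ s := fun h => has h
    have hcr := hnc a haS s hs hne
    rcases aux_nested hcr hcov.1 hcov.2 hov'.1 hov'.2 with h | h
    · obtain ⟨g1, g2, g3⟩ := h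
      exact hbmin a ⟨haS, has⟩ hba ⟨by omega, by omega⟩
    · exact hmin a haS h hcov
  have hInnSb_sub : {p : ℤ | InnerIsolatedOf S b p} ⊆ Q := by
    rintro p ⟨hiso, hov, hmin⟩
    exact ⟨fun a haX => hiso a (hXsub haX), hov, fun a haX h hc => hmin a (hXsub haX) h hc⟩
  have hQsub : ∀ p ∈ Q, p = s.1 ∨ p = s.2 ∨ InnerIsolatedOf S s p ∨ InnerIsolatedOf S b p := by
    rintro p ⟨hiso, hov, hmin⟩
    by_cases h1 : p = s.1
    · exact Or.inl h1
    by_cases h2 : p = s.2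
    · exact Or.inr (Or.inl h2)
    have hisoS : Isolated S p := by
      intro a haS hep
      by_cases has : a = s
      · rw [has] at hep
        unfold IsEndpoint at hep
        rcases hep with h | h
        · exact h1 h
        · exact h2 h
      · exact hiso a ⟨haS, fun h => has h⟩ hep
    by_cases hcv : s.2 < p ∧ p < s.1
    · refine Or.inr (Or.inr (Or.inl ⟨hisoS, hcv, ?_⟩))
      intro a haS hsa hcov
      have hsa' : s.2 < a.2 ∧ a.2 < a.1 ∧ a.1 < s.1 := hsa
      have hne : a ≠ s := by intro h; subst h; omega
      exact hmin a ⟨haS, fun h => hne h⟩ ⟨by omega, by omega, by omega⟩ hcov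
    · refine Or.inr (Or.inr (Or.inr ⟨hisoS, hov, ?_⟩))
      intro a haS hba hcov
      by_cases has : a = s
      · rw [has] at hcov
        exact hcv hcov
      · exact hmin a ⟨haS, fun h => has h⟩ hba hcov
  have hQeq : Q = ({s.2, s.1} : Set ℤ) ∪
      ({p : ℤ | InnerIsolatedOf S s p} ∪ {p : ℤ | InnerIsolatedOf S b p}) := by
    ext p
    constructor
    · intro hp
      rcases hQsub p hp with h | h | h | h
      · exact Or.inl (Or.inr h)
      · exact Or.inl (Or.inl h)
      · exact Or.inr (Or.inl h)
      · exact Or.inr (Or.inr h)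
    · rintro ((rfl | rfl) | (h | h))
      · exact hs2Q
      · exact hs1Q
      · exact hInnSs_sub h
      · exact hInnSb_sub h
  have hd2 : Disjoint {p : ℤ | InnerIsolatedOf S s p} {p : ℤ | InnerIsolatedOf S b p} := by
    rw [Set.disjoint_left]
    intro p hp hq
    exact aux_inner_unique hnc hs hbS (fun h => hbs h.symm) hp hq
  have hd1 : Disjoint ({s.2, s.1} : Set ℤ)
      ({p : ℤ | InnerIsolatedOf S s p} ∪ {p : ℤ | InnerIsolatedOf S b p}) := by
    rw [Set.disjoint_left]
    intro p hp hrest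
    have hiso : Isolated S p := by
      rcases hrest with ⟨h, -, -⟩ | ⟨h, -, -⟩ <;> exact h
    rcases hp with rfl | rfl
    · exact hiso s hs (Or.inr rfl)
    · exact hiso s hs (Or.inl rfl)
  have hQcard : Q.encard = ((2 * n + 2 : ℕ) : ℕ∞) := by
    rw [hQeq, Set.encard_union_eq hd1, Set.encard_union_eq hd2,
      Set.encard_pair (by omega : s.2 ≠ s.1), hinn s hs, hinn b hbS]
    push_cast
    ring
  have hsWin : Q ∩ Set.Ioo s.2 s.1 = {p : ℤ | InnerIsolatedOf S s p} := by
    ext p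
    constructor
    · rintro ⟨hpQ, hIoo⟩
      have hIoo' : s.2 < p ∧ p < s.1 := hIoo
      rcases hQsub p hpQ with h | h | h | h
      · omega
      · omega
      · exact h
      · exact (h.2.2 s hs hbov hIoo').elim
    · intro hp
      exact ⟨hInnSs_sub hp, hp.2.1⟩
  have hsCnt : (Q ∩ Set.Ioo s.2 s.1).encard = (n : ℕ∞) := by rw [hsWin]; exact hinn s hs
  -- Inn(X,a) = Inn(S,a) for a ≠ b
  have hInnX : ∀ a ∈ X, a ≠ b → {p : ℤ | InnerIsolatedOf X a p} = {p : ℤ | InnerIsolatedOf S a p} := by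
    intro a haX hab
    ext p
    simp only [Set.mem_setOf_eq]
    constructor
    · intro hp
      obtain ⟨hiso, hov, hmin⟩ := hp
      have hpQ : p ∉ Q := fun hq => aux_inner_unique hncX haX hbX hab ⟨hiso, hov, hmin⟩ hq
      have hisoS : Isolated S p := by
        intro a' ha'S hep
        by_cases has : a' = s
        · rw [has] at hep
          unfold IsEndpoint at hep
          rcases hep with h | h
          · exact hpQ (h ▸ hs1Q)
          · exact hpQ (h ▸ hs2Q)
        · exact hiso a' ⟨ha'S, fun h => has h⟩ hep
      refine ⟨hisoS, hov, ?_⟩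
      intro a' ha'S hov' hcov'
      by_cases has : a' = s
      · rw [has] at hov' hcov'
        have hov'' : a.2 < s.2 ∧ s.2 < s.1 ∧ s.1 < a.1 := hov'
        have hcov'' : s.2 < p ∧ p < s.1 := hcov'
        rcases aux_nested (hnc a (hXsub haX) b hbS hab) (by omega) (by omega) hbv'.1 hbv'.2 with h | h
        · exact hmin b hbX h ⟨by omega, by omega⟩
        · exact hbmin a haX h ⟨by omega, by omega⟩
      · exact hmin a' ⟨ha'S, fun h => has h⟩ hov' hcov'
    · exact aux_inner_anti hXsub
  -- Out(X) = Out(S)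
  have hOutX : {p : ℤ | OuterIsolated X p} = {p : ℤ | OuterIsolated S p} := by
    ext p
    simp only [Set.mem_setOf_eq]
    constructor
    · rintro ⟨hiso, hnov⟩
      constructor
      · intro a haS hep
        by_cases has : a = s
        · rw [has] at hep
          unfold IsEndpoint at hep
          rcases hep with h | h
          · exact hnov b hbX (h ▸ hbv)
          · exact hnov b hbX (h ▸ ⟨hbov'.1, by omega⟩)
        · exact hiso a ⟨haS, fun h => has h⟩ hep
      · intro a haS hcv
        by_cases has : a = s
        · rw [has] at hcv
          have hcv' : s.2 < p ∧ p < s.1 := hcv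
          exact hnov b hbX ⟨by omega, by omega⟩
        · exact hnov a ⟨haS, fun h => has h⟩ hcv
    · exact aux_outer_anti hXsub
  refine ⟨Q, hQcard, hs2Q, hs1Q, hwfs, hsCnt, ?_⟩
  apply Set.Subset.antisymm
  · -- forward: replacements satisfy window condition
    rintro c ⟨hne, hadmT, hncT, hinnT, houtT⟩
    have hcT : c ∈ X ∪ {c} := Or.inr rfl
    have hwfc : c.2 < c.1 := by have := (hadmT c hcT).1; omega
    have hcX : c ∉ X := by
      intro hcXmem
      have hTX : X ∪ {c} = X := Set.union_eq_left.2 (by simpa using hcXmem)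
      have hbT : b ∈ X ∪ {c} := Or.inl hbX
      have hcard := hinnT b hbT
      rw [hTX] at hcard
      rw [show {p : ℤ | InnerIsolatedOf X b p} = Q from rfl, hQcard] at hcard
      have : (2 * n + 2 : ℕ) = n := by exact_mod_cast hcard
      omega
    have hiso2 : Isolated X c.2 := by
      intro a haX hep
      have hne' : a ≠ c := fun h => hcX (h ▸ haX)
      have hcr := hncT a (Or.inl haX) c hcT hne'
      unfold Cross SharesEndpoint StrictCross at hcr
      unfold IsEndpoint at hep
      omega
    have hiso1 : Isolated X c.1 := by
      intro a haX hep
      have hne' : a ≠ c := fun h => hcX (h ▸ haX)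
      have hcr := hncT a (Or.inl haX) c hcT hne'
      unfold Cross SharesEndpoint StrictCross at hcr
      unfold IsEndpoint at hep
      omega
    by_cases hcover : ∃ a ∈ X, OverarcOfVertex a c.2
    · obtain ⟨a0, ha0, hcv0⟩ := hcover
      obtain ⟨m, hmX, hmcv, hmmin⟩ := aux_min_vertex ha0 hcv0
      have hmcv' : m.2 < c.2 ∧ c.2 < m.1 := hmcv
      have hwfm : m.2 < m.1 := wf m (hXsub hmX)
      have hcm : c ≠ m := fun h => hcX (h ▸ hmX)
      have hmc : OverarcOf m c := by
        have hcr := hncT c hcT m (Or.inl hmX) hcm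
        unfold Cross SharesEndpoint StrictCross at hcr
        unfold OverarcOf
        omega
      have hmc' : m.2 < c.2 ∧ c.2 < c.1 ∧ c.1 < m.1 := hmc
      have hm1min : ∀ a ∈ X, OverarcOf m a → ¬ OverarcOfVertex a c.1 := by
        intro a haX hma hcv
        have hcv' : a.2 < c.1 ∧ c.1 < a.1 := hcv
        have hma' : m.2 < a.2 ∧ a.2 < a.1 ∧ a.1 < m.1 := hma
        have hne' : c ≠ a := fun h => hcX (h ▸ haX)
        by_cases h2 : a.2 < c.2
        · exact hmmin a haX hma ⟨h2, by omega⟩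
        · have hcr := hncT c hcT a (Or.inl haX) hne'
          unfold Cross SharesEndpoint StrictCross at hcr
          omega
      by_cases hmb : m = b
      · rw [hmb] at hmcv hmmin hm1min hmc'
        have hc2Q : c.2 ∈ Q := ⟨hiso2, hmcv, hmmin⟩
        have hc1Q : c.1 ∈ Q := ⟨hiso1, ⟨by omega, hmc'.2.2⟩, hm1min⟩
        have hncc : ∀ a ∈ X, ¬ Cross c a :=
          fun a haX => hncT c hcT a (Or.inl haX) (fun h => hcX (h ▸ haX))
        have hcount := hinnT c hcT
        rw [aux_innT_c hQiff hVb hEndV hc2Q hc1Q hncc hcX] at hcount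
        exact ⟨hne, hc2Q, hc1Q, hwfc, hcount⟩
      · exfalso
        have hcard : {p : ℤ | InnerIsolatedOf X m p}.encard = (n : ℕ∞) := by
          rw [hInnX m hmX hmb]
          exact hinn m (hXsub hmX)
        exact aux_m_contra X c m n hncT hinnT hcX hwfc hmX hmc hmmin hiso2 hiso1 hm1min hcard
    · exfalso
      push_neg at hcover
      have hnocov1 : ∀ a ∈ X, ¬ OverarcOfVertex a c.1 := by
        intro a haX hcv
        have hcv' : a.2 < c.1 ∧ c.1 < a.1 := hcv
        have hnc2 := hcover a haX
        unfold OverarcOfVertex at hnc2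
        have hne' : c ≠ a := fun h => hcX (h ▸ haX)
        have hcr := hncT c hcT a (Or.inl haX) hne'
        unfold Cross SharesEndpoint StrictCross at hcr
        omega
      have hOutXcard : {p : ℤ | OuterIsolated X p}.encard = (n : ℕ∞) := by
        rw [hOutX]; exact hout
      exact aux_out_contra X c n hncT hinnT hcX hwfc hiso2 hiso1 hcover hnocov1 hOutXcard
  · -- backward: window arcs are replacements
    rintro c ⟨hne, hc2, hc1, hclt, hcnt⟩
    have h2 := hc2
    obtain ⟨hiso2, hV2, hmin2⟩ := h2
    have h1 := hc1
    obtain ⟨hiso1, hV1, hmin1⟩ := h1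
    have hV2' : b.2 < c.2 ∧ c.2 < b.1 := hV2
    have hV1' : b.2 < c.1 ∧ c.1 < b.1 := hV1
    have hncc : ∀ a ∈ X, ¬ Cross c a := aux_noncross_c hQiff hCov hc2 hc1
    have hcX : c ∉ X := fun h => hiso1 c h (Or.inl rfl)
    have hncT : ∀ a ∈ X ∪ {c}, ∀ a' ∈ X ∪ {c}, a ≠ a' → ¬ Cross a a' := by
      rintro a (haX | rfl) a' (ha'X | rfl) hne'
      · exact hncX a haX a' ha'X hne'
      · exact fun hcr => hncc a haX (aux_cross_comm hcr)
      · exact hncc a' ha'X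
      · exact absurd rfl hne'
    -- admissibility of c
    have hz : (Q ∩ Set.Ioo c.2 c.1).ncard = n := by
      rw [Set.ncard_def, hcnt]
      rfl
    have hdvd := aux_lemF w X hadmX hw hncX U Q (c.1 - c.2).toNat c.2 c.1 rfl hclt
      (fun p hp1 hp2 => by
        constructor
        · intro hq
          exact ⟨((hQiff p).1 hq).1, ((hQiff p).1 hq).2.2⟩
        · intro hq
          exact (hQiff p).2 ⟨hq.1, hVb c.2 c.1 p hc2 hc1 hp1 hp2, hq.2⟩)
      (fun p hp1 hp2 => hEndV p (hVb c.2 c.1 p hc2 hc1 hp1 hp2))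
      (fun a haX hU h => hmin2 a haX hU h)
      (fun a haX _ h => hiso2 a haX (Or.inr h.symm))
      (fun a haX hU h => hmin1 a haX hU h)
      (fun a haX _ h => hiso1 a haX (Or.inl h.symm))
    rw [hz] at hdvd
    have hsize : (n : ℤ) ≤ c.1 - c.2 - 1 := by
      have hsub : Q ∩ Set.Ioo c.2 c.1 ⊆ Set.Ioo c.2 c.1 := Set.inter_subset_right
      have hle := Set.ncard_le_ncard hsub (Set.finite_Ioo c.2 c.1)
      rw [hz] at hle
      have hIoon : (Set.Ioo c.2 c.1).ncard = (c.1 - c.2 - 1).toNat := by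
        rw [← Finset.coe_Ioo, Set.ncard_coe_finset, Int.card_Ioo]
      rw [hIoon] at hle
      omega
    obtain ⟨k, hk⟩ := hdvd
    have hadmc : IsAdmissible w c := by
      refine ⟨by omega, ⟨1 - k, by linear_combination -hk - hn⟩⟩
    -- inner-isolated identity for b in the new configuration
    have hovbc : OverarcOf b c := ⟨hV2'.1, hclt, hV1'.2⟩
    have hTb : {p : ℤ | InnerIsolatedOf (X ∪ {c}) b p} = Q \ Set.Icc c.2 c.1 := by
      ext p
      simp only [Set.mem_setOf_eq, Set.mem_diff, Set.mem_Icc]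
      constructor
      · rintro ⟨hiso, hov, hmin⟩
        have hpQ : p ∈ Q :=
          ⟨fun a ha => hiso a (Or.inl ha), hov, fun a ha h hc' => hmin a (Or.inl ha) h hc'⟩
        refine ⟨hpQ, ?_⟩
        rintro ⟨hge, hle⟩
        rcases eq_or_lt_of_le hge with heq | hgt
        · exact hiso c (Or.inr rfl) (Or.inr heq.symm)
        rcases eq_or_lt_of_le hle with heq | hlt'
        · exact hiso c (Or.inr rfl) (Or.inl heq)
        · exact hmin c (Or.inr rfl) hovbc ⟨hgt, hlt'⟩
      · rintro ⟨hpQ, hpIcc⟩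
        obtain ⟨hiso, hov, hmin⟩ := hpQ
        refine ⟨?_, hov, ?_⟩
        · rintro a (haX | rfl)
          · exact hiso a haX
          · intro hep
            unfold IsEndpoint at hep
            exact hpIcc ⟨by omega, by omega⟩
        · rintro a (haX | rfl) h hcov
          · exact hmin a haX h hcov
          · obtain ⟨g1, g2⟩ := hcov
            exact hpIcc ⟨by omega, by omega⟩
    have hTbcard : {p : ℤ | InnerIsolatedOf (X ∪ {c}) b p}.encard = (n : ℕ∞) := by
      rw [hTb]
      have hIcc : Q ∩ Set.Icc c.2 c.1 = (Q ∩ Set.Ioo c.2 c.1) ∪ {c.2, c.1} := by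
        ext p
        simp only [Set.mem_inter_iff, Set.mem_Icc, Set.mem_Ioo, Set.mem_union,
          Set.mem_insert_iff, Set.mem_singleton_iff]
        constructor
        · rintro ⟨hp, hge, hle⟩
          rcases eq_or_lt_of_le hge with heq | hgt
          · exact Or.inr (Or.inl heq.symm)
          rcases eq_or_lt_of_le hle with heq | hlt'
          · exact Or.inr (Or.inr heq)
          · exact Or.inl ⟨hp, hgt, hlt'⟩
        · rintro (⟨hp, hgt, hlt'⟩ | rfl | rfl)
          · exact ⟨hp, by omega, by omega⟩
          · exact ⟨hc2, by omega, by omega⟩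
          · exact ⟨hc1, by omega, by omega⟩
      have hdIoo : Disjoint (Q ∩ Set.Ioo c.2 c.1) ({c.2, c.1} : Set ℤ) := by
        rw [Set.disjoint_right]
        rintro p (rfl | rfl) hp
        · exact absurd hp.2.1 (lt_irrefl _)
        · exact absurd hp.2.2 (lt_irrefl _)
      have hIcccard : (Q ∩ Set.Icc c.2 c.1).encard = ((n + 2 : ℕ) : ℕ∞) := by
        rw [hIcc, Set.encard_union_eq hdIoo, hcnt, Set.encard_pair (by omega : c.2 ≠ c.1)]
        push_cast
        ring
      have hdiff := Set.encard_diff_add_encard_inter Q (Set.Icc c.2 c.1)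
      rw [hIcccard, hQcard] at hdiff
      refine ENat.add_left_injective_of_ne_top (ENat.coe_ne_top (n+2)) ?_
      show _ + _ = _ + _
      rw [hdiff]
      push_cast
      ring
    refine ⟨hne, ?_, hncT, ?_, ?_⟩
    · rintro a (haX | rfl)
      · exact hadmX a haX
      · exact hadmc
    · rintro a (haX | haC)
      · by_cases hab : a = b
        · subst hab
          exact hTbcard
        · have hend : ∀ p, InnerIsolatedOf X a p → ¬ IsEndpoint p c := by
            intro p hp hep
            unfold IsEndpoint at hep
            rcases hep with rfl | rfl
            · exact aux_inner_unique hncX haX hbX hab hp hc1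
            · exact aux_inner_unique hncX haX hbX hab hp hc2
          have hcovprem : ∀ p, InnerIsolatedOf X a p → OverarcOf a c → ¬ OverarcOfVertex c p := by
            intro p hp hac hcv
            have hac' : a.2 < c.2 ∧ c.2 < c.1 ∧ c.1 < a.1 := hac
            have hcv' : c.2 < p ∧ p < c.1 := hcv
            rcases hCov a haX c.2 hV2 (by omega) (by omega) with hU | hall
            · exact hmin2 a haX hU ⟨by omega, by omega⟩
            · have hh1 := hall (b.2 + 1) ⟨by omega, by omega⟩
              have hh2 := hall (b.1 - 1) ⟨by omega, by omega⟩
              have hab' := hnc a (hXsub haX) b hbS hab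
              unfold Cross SharesEndpoint StrictCross at hab'
              have hovab : OverarcOf a b := ⟨by omega, by omega, by omega⟩
              exact hp.2.2 b hbX hovab ⟨by omega, by omega⟩
          rw [aux_innT_other X c a hend hcovprem, hInnX a haX hab]
          exact hinn a (hXsub haX)
      · rw [Set.mem_singleton_iff] at haC
        rw [haC, aux_innT_c hQiff hVb hEndV hc2 hc1 hncc hcX]
        exact hcnt
    · have hOutT : {p : ℤ | OuterIsolated (X ∪ {c}) p} = {p : ℤ | OuterIsolated S p} := by
        ext p
        simp only [Set.mem_setOf_eq]
        constructor
        · rintro ⟨hiso, hnov⟩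
          constructor
          · intro a haS hep
            by_cases has : a = s
            · subst has
              unfold IsEndpoint at hep
              rcases hep with h | h
              · exact hnov b (Or.inl hbX) (h ▸ hbv)
              · exact hnov b (Or.inl hbX) (h ▸ ⟨hbov'.1, by omega⟩)
            · exact hiso a (Or.inl ⟨haS, fun h => has h⟩) hep
          · intro a haS hcv
            by_cases has : a = s
            · rw [has] at hcv
              have hcv' : s.2 < p ∧ p < s.1 := hcv
              exact hnov b (Or.inl hbX) ⟨by omega, by omega⟩
            · exact hnov a (Or.inl ⟨haS, fun h => has h⟩) hcv
        · rintro ⟨hiso, hnov⟩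
          constructor
          · rintro a (haX | rfl)
            · exact hiso a (hXsub haX)
            · intro hep
              unfold IsEndpoint at hep
              rcases hep with h | h
              · exact hnov b hbS (h ▸ hV1)
              · exact hnov b hbS (h ▸ hV2)
          · rintro a (haX | rfl) hcv
            · exact hnov a (hXsub haX) hcv
            · obtain ⟨g1, g2⟩ := hcv
              obtain ⟨f1, f2⟩ := hV1'
              obtain ⟨e1, e2⟩ := hV2'
              exact hnov b hbS ⟨by omega, by omega⟩
      rw [hOutT, hout]
      exact_mod_cast Nat.cast_le.mpr (by omega : (-w - 1).toNat ≤ (-w).toNat)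

lemma aux_main_out (w : ℤ) (hw : w ≤ -1) (S : Set Arc)
    (hadm : ∀ a ∈ S, IsAdmissible w a)
    (hnc : ∀ a ∈ S, ∀ b ∈ S, a ≠ b → ¬ Cross a b)
    (hinn : ∀ a ∈ S, {p : ℤ | InnerIsolatedOf S a p}.encard = ((-w - 1).toNat : ℕ∞))
    (hout : {p : ℤ | OuterIsolated S p}.encard = ((-w - 1).toNat : ℕ∞))
    (s : Arc) (hs : s ∈ S)
    (hnb : ∀ a ∈ S \ {s}, ¬ OverarcOfVertex a s.1) :
    ∃ Q : Set ℤ,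
      Q.encard = ((2 * (-w - 1).toNat + 2 : ℕ) : ℕ∞) ∧ s.2 ∈ Q ∧ s.1 ∈ Q ∧ s.2 < s.1 ∧
      (Q ∩ Set.Ioo s.2 s.1).encard = ((-w - 1).toNat : ℕ∞) ∧
      {t : Arc | IsReplacement w S s t} =
        {c : Arc | c ≠ s ∧ c.2 ∈ Q ∧ c.1 ∈ Q ∧ c.2 < c.1 ∧
          (Q ∩ Set.Ioo c.2 c.1).encard = ((-w - 1).toNat : ℕ∞)} := by
  set n := (-w - 1).toNat with hndef
  have hn : (n : ℤ) = -w - 1 := Int.toNat_of_nonneg (by omega)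
  set X := S \ {s} with hXdef
  have hXsub : X ⊆ S := Set.diff_subset
  have hadmX : ∀ a ∈ X, IsAdmissible w a := fun a ha => hadm a (hXsub ha)
  have hncX : ∀ a ∈ X, ∀ a' ∈ X, a ≠ a' → ¬ Cross a a' :=
    fun a ha a' ha' h => hnc a (hXsub ha) a' (hXsub ha') h
  have wf : ∀ a ∈ S, a.2 < a.1 := fun a ha => by have := (hadm a ha).1; omega
  have hwfs : s.2 < s.1 := wf s hs
  set Q := {p : ℤ | OuterIsolated X p} with hQdef
  set V : ℤ → Prop := fun _ => True with hVdef
  set U : Arc → Prop := fun _ => True with hUdef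
  have hQiff : ∀ p, p ∈ Q ↔
      (Isolated X p ∧ V p ∧ ∀ a ∈ X, U a → ¬(a.2 < p ∧ p < a.1)) := by
    intro p
    constructor
    · rintro ⟨h1, h2⟩
      exact ⟨h1, trivial, fun a ha _ => h2 a ha⟩
    · rintro ⟨h1, -, h3⟩
      exact ⟨h1, fun a ha => h3 a ha trivial⟩
  have hVb : ∀ p q r, p ∈ Q → q ∈ Q → p < r → r < q → V r := fun _ _ _ _ _ _ _ => trivial
  have hEndV : ∀ p, V p → ∀ a ∈ X, IsEndpoint p a → U a := fun _ _ _ _ _ => trivial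
  have hCov : ∀ a ∈ X, ∀ p, V p → a.2 < p → p < a.1 →
      U a ∨ (∀ r, V r → a.2 < r ∧ r < a.1) := fun _ _ _ _ _ _ => Or.inl trivial
  have hsiso1 : Isolated X s.1 := by
    intro a haX hep
    obtain ⟨haS, has⟩ := haX
    have hne : a ≠ s := fun h => has h
    have hcr := hnc a haS s hs hne
    unfold Cross SharesEndpoint StrictCross at hcr
    unfold IsEndpoint at hep
    omega
  have hsiso2 : Isolated X s.2 := by
    intro a haX hep
    obtain ⟨haS, has⟩ := haX
    have hne : a ≠ s := fun h => has h
    have hcr := hnc a haS s hs hne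
    unfold Cross SharesEndpoint StrictCross at hcr
    unfold IsEndpoint at hep
    omega
  have hnocov2 : ∀ a ∈ X, ¬ OverarcOfVertex a s.2 := by
    intro a haX hcv
    have hcv' : a.2 < s.2 ∧ s.2 < a.1 := hcv
    obtain ⟨haS, has⟩ := haX
    have hne : a ≠ s := fun h => has h
    have hwfa : a.2 < a.1 := wf a haS
    have hnb' := hnb a ⟨haS, has⟩
    unfold OverarcOfVertex at hnb'
    have hcr := hnc a haS s hs hne
    unfold Cross SharesEndpoint StrictCross at hcr
    omega
  have hs1Q : s.1 ∈ Q := ⟨hsiso1, hnb⟩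
  have hs2Q : s.2 ∈ Q := ⟨hsiso2, hnocov2⟩
  have hInnSs_sub : {p : ℤ | InnerIsolatedOf S s p} ⊆ Q := by
    rintro p ⟨hiso, hov, hmin⟩
    have hov' : s.2 < p ∧ p < s.1 := hov
    refine ⟨fun a haX => hiso a (hXsub haX), ?_⟩
    intro a haX hcov
    obtain ⟨haS, has⟩ := haX
    have hne : a ≠ s := fun h => has h
    have hcr := hnc a haS s hs hne
    rcases aux_nested hcr hcov.1 hcov.2 hov'.1 hov'.2 with h | h
    · obtain ⟨g1, g2, g3⟩ := h
      exact hnb a ⟨haS, has⟩ ⟨by omega, by omega⟩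
    · exact hmin a haS h hcov
  have hOutS_sub : {p : ℤ | OuterIsolated S p} ⊆ Q := fun p hp => aux_outer_anti hXsub hp
  have hQsub : ∀ p ∈ Q, p = s.1 ∨ p = s.2 ∨ InnerIsolatedOf S s p ∨ OuterIsolated S p := by
    rintro p ⟨hiso, hnov⟩
    by_cases h1 : p = s.1
    · exact Or.inl h1
    by_cases h2 : p = s.2
    · exact Or.inr (Or.inl h2)
    have hisoS : Isolated S p := by
      intro a haS hep
      by_cases has : a = s
      · rw [has] at hep
        unfold IsEndpoint at hep
        rcases hep with h | h
        · exact h1 h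
        · exact h2 h
      · exact hiso a ⟨haS, fun h => has h⟩ hep
    by_cases hcv : s.2 < p ∧ p < s.1
    · refine Or.inr (Or.inr (Or.inl ⟨hisoS, hcv, ?_⟩))
      intro a haS hsa hcov
      have hsa' : s.2 < a.2 ∧ a.2 < a.1 ∧ a.1 < s.1 := hsa
      have hne : a ≠ s := by intro h; rw [h] at hsa'; omega
      exact hnov a ⟨haS, fun h => hne h⟩ hcov
    · refine Or.inr (Or.inr (Or.inr ⟨hisoS, ?_⟩))
      intro a haS hcov
      by_cases has : a = s
      · rw [has] at hcov
        exact hcv hcov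
      · exact hnov a ⟨haS, fun h => has h⟩ hcov
  have hQeq : Q = ({s.2, s.1} : Set ℤ) ∪
      ({p : ℤ | InnerIsolatedOf S s p} ∪ {p : ℤ | OuterIsolated S p}) := by
    ext p
    constructor
    · intro hp
      rcases hQsub p hp with h | h | h | h
      · exact Or.inl (Or.inr h)
      · exact Or.inl (Or.inl h)
      · exact Or.inr (Or.inl h)
      · exact Or.inr (Or.inr h)
    · rintro ((rfl | rfl) | (h | h))
      · exact hs2Q
      · exact hs1Q
      · exact hInnSs_sub h
      · exact hOutS_sub h
  have hd2 : Disjoint {p : ℤ | InnerIsolatedOf S s p} {p : ℤ | OuterIsolated S p} := by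
    rw [Set.disjoint_left]
    intro p hp hq
    exact hq.2 s hs hp.2.1
  have hd1 : Disjoint ({s.2, s.1} : Set ℤ)
      ({p : ℤ | InnerIsolatedOf S s p} ∪ {p : ℤ | OuterIsolated S p}) := by
    rw [Set.disjoint_left]
    intro p hp hrest
    have hiso : Isolated S p := by
      rcases hrest with ⟨h, -, -⟩ | ⟨h, -⟩ <;> exact h
    rcases hp with rfl | rfl
    · exact hiso s hs (Or.inr rfl)
    · exact hiso s hs (Or.inl rfl)
  have hQcard : Q.encard = ((2 * n + 2 : ℕ) : ℕ∞) := by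
    rw [hQeq, Set.encard_union_eq hd1, Set.encard_union_eq hd2,
      Set.encard_pair (by omega : s.2 ≠ s.1), hinn s hs, hout]
    push_cast
    ring
  have hsWin : Q ∩ Set.Ioo s.2 s.1 = {p : ℤ | InnerIsolatedOf S s p} := by
    ext p
    constructor
    · rintro ⟨hpQ, hIoo⟩
      have hIoo' : s.2 < p ∧ p < s.1 := hIoo
      rcases hQsub p hpQ with h | h | h | h
      · omega
      · omega
      · exact h
      · exact (h.2 s hs hIoo').elim
    · intro hp
      exact ⟨hInnSs_sub hp, hp.2.1⟩
  have hsCnt : (Q ∩ Set.Ioo s.2 s.1).encard = (n : ℕ∞) := by rw [hsWin]; exact hinn s hs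
  have hInnX : ∀ a ∈ X, {p : ℤ | InnerIsolatedOf X a p} = {p : ℤ | InnerIsolatedOf S a p} := by
    intro a haX
    ext p
    simp only [Set.mem_setOf_eq]
    constructor
    · intro hp
      obtain ⟨hiso, hov, hmin⟩ := hp
      have hp1 : p ≠ s.1 := by
        intro h
        exact hs1Q.2 a haX (h ▸ hov)
      have hp2 : p ≠ s.2 := by
        intro h
        exact hs2Q.2 a haX (h ▸ hov)
      have hisoS : Isolated S p := by
        intro a' ha'S hep
        by_cases has : a' = s
        · rw [has] at hep
          unfold IsEndpoint at hep
          rcases hep with h | h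
          · exact hp1 h
          · exact hp2 h
        · exact hiso a' ⟨ha'S, fun h => has h⟩ hep
      refine ⟨hisoS, hov, ?_⟩
      intro a' ha'S hov' hcov'
      by_cases has : a' = s
      · rw [has] at hov'
        have hov'' : a.2 < s.2 ∧ s.2 < s.1 ∧ s.1 < a.1 := hov'
        exact hnb a haX ⟨by omega, by omega⟩
      · exact hmin a' ⟨ha'S, fun h => has h⟩ hov' hcov'
    · exact aux_inner_anti hXsub
  refine ⟨Q, hQcard, hs2Q, hs1Q, hwfs, hsCnt, ?_⟩
  apply Set.Subset.antisymm
  · rintro c ⟨hne, hadmT, hncT, hinnT, houtT⟩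
    have hcT : c ∈ X ∪ {c} := Or.inr rfl
    have hwfc : c.2 < c.1 := by have := (hadmT c hcT).1; omega
    have hcX : c ∉ X := by
      intro hcXmem
      have hTX : X ∪ {c} = X := Set.union_eq_left.2 (by simpa using hcXmem)
      have hcard := houtT
      rw [hTX] at hcard
      rw [show {p : ℤ | OuterIsolated X p} = Q from rfl, hQcard] at hcard
      have hwn : ((-w).toNat : ℕ) = n + 1 := by omega
      rw [hwn] at hcard
      have : (2 * n + 2 : ℕ) ≤ n + 1 := by exact_mod_cast hcard
      omega
    have hiso2 : Isolated X c.2 := by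
      intro a haX hep
      have hne' : a ≠ c := fun h => hcX (h ▸ haX)
      have hcr := hncT a (Or.inl haX) c hcT hne'
      unfold Cross SharesEndpoint StrictCross at hcr
      unfold IsEndpoint at hep
      omega
    have hiso1 : Isolated X c.1 := by
      intro a haX hep
      have hne' : a ≠ c := fun h => hcX (h ▸ haX)
      have hcr := hncT a (Or.inl haX) c hcT hne'
      unfold Cross SharesEndpoint StrictCross at hcr
      unfold IsEndpoint at hep
      omega
    by_cases hcover : ∃ a ∈ X, OverarcOfVertex a c.2
    · exfalso
      obtain ⟨a0, ha0, hcv0⟩ := hcover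
      obtain ⟨m, hmX, hmcv, hmmin⟩ := aux_min_vertex ha0 hcv0
      have hmcv' : m.2 < c.2 ∧ c.2 < m.1 := hmcv
      have hwfm : m.2 < m.1 := wf m (hXsub hmX)
      have hcm : c ≠ m := fun h => hcX (h ▸ hmX)
      have hmc : OverarcOf m c := by
        have hcr := hncT c hcT m (Or.inl hmX) hcm
        unfold Cross SharesEndpoint StrictCross at hcr
        unfold OverarcOf
        omega
      have hmc' : m.2 < c.2 ∧ c.2 < c.1 ∧ c.1 < m.1 := hmc
      have hm1min : ∀ a ∈ X, OverarcOf m a → ¬ OverarcOfVertex a c.1 := by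
        intro a haX hma hcv
        have hcv' : a.2 < c.1 ∧ c.1 < a.1 := hcv
        have hma' : m.2 < a.2 ∧ a.2 < a.1 ∧ a.1 < m.1 := hma
        have hne' : c ≠ a := fun h => hcX (h ▸ haX)
        by_cases h2 : a.2 < c.2
        · exact hmmin a haX hma ⟨h2, by omega⟩
        · have hcr := hncT c hcT a (Or.inl haX) hne'
          unfold Cross SharesEndpoint StrictCross at hcr
          omega
      have hcard : {p : ℤ | InnerIsolatedOf X m p}.encard = (n : ℕ∞) := by
        rw [hInnX m hmX]
        exact hinn m (hXsub hmX)
      exact aux_m_contra X c m n hncT hinnT hcX hwfc hmX hmc hmmin hiso2 hiso1 hm1min hcard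
    · push_neg at hcover
      have hnocov1 : ∀ a ∈ X, ¬ OverarcOfVertex a c.1 := by
        intro a haX hcv
        have hcv' : a.2 < c.1 ∧ c.1 < a.1 := hcv
        have hnc2 := hcover a haX
        unfold OverarcOfVertex at hnc2
        have hne' : c ≠ a := fun h => hcX (h ▸ haX)
        have hcr := hncT c hcT a (Or.inl haX) hne'
        unfold Cross SharesEndpoint StrictCross at hcr
        omega
      have hc2Q : c.2 ∈ Q := ⟨hiso2, hcover⟩
      have hc1Q : c.1 ∈ Q := ⟨hiso1, hnocov1⟩
      have hncc : ∀ a ∈ X, ¬ Cross c a :=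
        fun a haX => hncT c hcT a (Or.inl haX) (fun h => hcX (h ▸ haX))
      have hcount := hinnT c hcT
      rw [aux_innT_c hQiff hVb hEndV hc2Q hc1Q hncc hcX] at hcount
      exact ⟨hne, hc2Q, hc1Q, hwfc, hcount⟩
  · rintro c ⟨hne, hc2, hc1, hclt, hcnt⟩
    have h2 := hc2
    obtain ⟨hiso2, hmin2⟩ := h2
    have h1 := hc1
    obtain ⟨hiso1, hmin1⟩ := h1
    have hncc : ∀ a ∈ X, ¬ Cross c a := aux_noncross_c hQiff hCov hc2 hc1
    have hcX : c ∉ X := fun h => hiso1 c h (Or.inl rfl)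
    have hncT : ∀ a ∈ X ∪ {c}, ∀ a' ∈ X ∪ {c}, a ≠ a' → ¬ Cross a a' := by
      rintro a (haX | rfl) a' (ha'X | rfl) hne'
      · exact hncX a haX a' ha'X hne'
      · exact fun hcr => hncc a haX (aux_cross_comm hcr)
      · exact hncc a' ha'X
      · exact absurd rfl hne'
    have hz : (Q ∩ Set.Ioo c.2 c.1).ncard = n := by
      rw [Set.ncard_def, hcnt]
      rfl
    have hdvd := aux_lemF w X hadmX hw hncX U Q (c.1 - c.2).toNat c.2 c.1 rfl hclt
      (fun p hp1 hp2 => by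
        constructor
        · intro hq
          exact ⟨((hQiff p).1 hq).1, ((hQiff p).1 hq).2.2⟩
        · intro hq
          exact (hQiff p).2 ⟨hq.1, trivial, hq.2⟩)
      (fun p hp1 hp2 a haX hep => trivial)
      (fun a haX _ h => hmin2 a haX h)
      (fun a haX _ h => hiso2 a haX (Or.inr h.symm))
      (fun a haX _ h => hmin1 a haX h)
      (fun a haX _ h => hiso1 a haX (Or.inl h.symm))
    rw [hz] at hdvd
    have hsize : (n : ℤ) ≤ c.1 - c.2 - 1 := by
      have hsub : Q ∩ Set.Ioo c.2 c.1 ⊆ Set.Ioo c.2 c.1 := Set.inter_subset_right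
      have hle := Set.ncard_le_ncard hsub (Set.finite_Ioo c.2 c.1)
      rw [hz] at hle
      have hIoon : (Set.Ioo c.2 c.1).ncard = (c.1 - c.2 - 1).toNat := by
        rw [← Finset.coe_Ioo, Set.ncard_coe_finset, Int.card_Ioo]
      rw [hIoon] at hle
      omega
    obtain ⟨k, hk⟩ := hdvd
    have hadmc : IsAdmissible w c := ⟨by omega, ⟨1 - k, by linear_combination -hk - hn⟩⟩
    have hOutT : {p : ℤ | OuterIsolated (X ∪ {c}) p} = Q \ Set.Icc c.2 c.1 := by
      ext p
      simp only [Set.mem_setOf_eq, Set.mem_diff, Set.mem_Icc]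
      constructor
      · rintro ⟨hiso, hnov⟩
        have hpQ : p ∈ Q :=
          ⟨fun a ha => hiso a (Or.inl ha), fun a ha => hnov a (Or.inl ha)⟩
        refine ⟨hpQ, ?_⟩
        rintro ⟨hge, hle⟩
        rcases eq_or_lt_of_le hge with heq | hgt
        · exact hiso c (Or.inr rfl) (Or.inr heq.symm)
        rcases eq_or_lt_of_le hle with heq | hlt'
        · exact hiso c (Or.inr rfl) (Or.inl heq)
        · exact hnov c (Or.inr rfl) ⟨hgt, hlt'⟩
      · rintro ⟨hpQ, hpIcc⟩
        obtain ⟨hiso, hnov⟩ := hpQ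
        constructor
        · rintro a (haX | rfl)
          · exact hiso a haX
          · intro hep
            unfold IsEndpoint at hep
            exact hpIcc ⟨by omega, by omega⟩
        · rintro a (haX | rfl) hcov
          · exact hnov a haX hcov
          · obtain ⟨g1, g2⟩ := hcov
            exact hpIcc ⟨by omega, by omega⟩
    have hOutTcard : {p : ℤ | OuterIsolated (X ∪ {c}) p}.encard = (n : ℕ∞) := by
      rw [hOutT]
      have hIcc : Q ∩ Set.Icc c.2 c.1 = (Q ∩ Set.Ioo c.2 c.1) ∪ {c.2, c.1} := by
        ext p
        simp only [Set.mem_inter_iff, Set.mem_Icc, Set.mem_Ioo, Set.mem_union,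
          Set.mem_insert_iff, Set.mem_singleton_iff]
        constructor
        · rintro ⟨hp, hge, hle⟩
          rcases eq_or_lt_of_le hge with heq | hgt
          · exact Or.inr (Or.inl heq.symm)
          rcases eq_or_lt_of_le hle with heq | hlt'
          · exact Or.inr (Or.inr heq)
          · exact Or.inl ⟨hp, hgt, hlt'⟩
        · rintro (⟨hp, hgt, hlt'⟩ | rfl | rfl)
          · exact ⟨hp, by omega, by omega⟩
          · exact ⟨hc2, by omega, by omega⟩
          · exact ⟨hc1, by omega, by omega⟩
      have hdIoo : Disjoint (Q ∩ Set.Ioo c.2 c.1) ({c.2, c.1} : Set ℤ) := by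
        rw [Set.disjoint_right]
        rintro p (rfl | rfl) hp
        · exact absurd hp.2.1 (lt_irrefl _)
        · exact absurd hp.2.2 (lt_irrefl _)
      have hIcccard : (Q ∩ Set.Icc c.2 c.1).encard = ((n + 2 : ℕ) : ℕ∞) := by
        rw [hIcc, Set.encard_union_eq hdIoo, hcnt, Set.encard_pair (by omega : c.2 ≠ c.1)]
        push_cast
        ring
      have hdiff := Set.encard_diff_add_encard_inter Q (Set.Icc c.2 c.1)
      rw [hIcccard, hQcard] at hdiff
      refine ENat.add_left_injective_of_ne_top (ENat.coe_ne_top (n+2)) ?_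
      show _ + _ = _ + _
      rw [hdiff]
      push_cast
      ring
    refine ⟨hne, ?_, hncT, ?_, ?_⟩
    · rintro a (haX | rfl)
      · exact hadmX a haX
      · exact hadmc
    · rintro a (haX | haC)
      · have hend : ∀ p, InnerIsolatedOf X a p → ¬ IsEndpoint p c := by
          intro p hp hep
          unfold IsEndpoint at hep
          rcases hep with rfl | rfl
          · exact hmin1 a haX hp.2.1
          · exact hmin2 a haX hp.2.1
        have hcovprem : ∀ p, InnerIsolatedOf X a p → OverarcOf a c → ¬ OverarcOfVertex c p := by
          intro p hp hac hcv
          have hac' : a.2 < c.2 ∧ c.2 < c.1 ∧ c.1 < a.1 := hac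
          exact hmin2 a haX ⟨by omega, by omega⟩
        rw [aux_innT_other X c a hend hcovprem, hInnX a haX]
        exact hinn a (hXsub haX)
      · rw [Set.mem_singleton_iff] at haC
        rw [haC, aux_innT_c hQiff hVb hEndV hc2 hc1 hncc hcX]
        exact hcnt
    · rw [hOutTcard]
      exact_mod_cast Nat.cast_le.mpr (by omega : (-w - 1).toNat ≤ (-w).toNat)

/-- in a combinatorial `w`-Riedtmann configuration (`w ≤ -1`) with exactly
`|w| - 1` outer-isolated vertices, every arc has exactly `|w| - 1` replacements. -/
theorem stmt_2 (w : ℤ) (hw : w ≤ -1) (S : Set Arc) (hS : IsRiedtmann w S)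
    (hout : {p : ℤ | OuterIsolated S p}.encard = ((-w - 1).toNat : ℕ∞))
    (s : Arc) (hs : s ∈ S) :
    {t : Arc | IsReplacement w S s t}.encard = ((-w - 1).toNat : ℕ∞) := by
  obtain ⟨⟨hadm, hnc, hinn, houtle⟩, hRied⟩ := hS
  by_cases hb : ∃ a ∈ S \ {s}, OverarcOfVertex a s.1
  · obtain ⟨a0, ha0, hcv0⟩ := hb
    obtain ⟨b, hbX, hbv, hbmin⟩ := aux_min_vertex ha0 hcv0
    obtain ⟨Q, hQcard, hs2Q, hs1Q, hslt, hsCnt, hrepl⟩ :=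
      aux_main_b w hw S hadm hnc hinn hout s hs b hbX.1 (fun h => hbX.2 h) hbv hbmin
    rw [hrepl]
    exact aux_count_windows Q _ s hQcard hs2Q hs1Q hslt hsCnt
  · push_neg at hb
    obtain ⟨Q, hQcard, hs2Q, hs1Q, hslt, hsCnt, hrepl⟩ :=
      aux_main_out w hw S hadm hnc hinn hout s hs hb
    rw [hrepl]
    exact aux_count_windows Q _ s hQcard hs2Q hs1Q hslt hsCnt
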